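/- ψ_3D ≤ φ_3D on the admissible region, where φ_3D(s,t) = (μ/2)(r^{1/3}(s²/r + t²/s² + 1/t²) − 3), with equality precisely on the region S. -/
import Mathlib

open Set

/-- Region L (liquid-like) of DeSimone–Dolzmann, in `(s,t)` variables. -/
def Lset (r : ℝ) : Set (ℝ × ℝ) :=
  {p | p.2 ≤ p.1 ^ 2 ∧ p.2 ≤ r ^ ((1 : ℝ) / 6) ∧ Real.sqrt p.1 ≤ p.2}

/-- Region M (stressed microstructure). -/
def Mset (r : ℝ) : Set (ℝ × ℝ) :=
  {p | p.2 ≤ p.1 ^ 2 ∧ r ^ (-(1 : ℝ) / 2) * p.1 ^ 2 ≤ p.2 ∧ r ^ ((1 : ℝ) / 6) ≤ p.2}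

/-- Region S (normal solid). -/
def Sset (r : ℝ) : Set (ℝ × ℝ) :=
  {p | p.2 ≤ r ^ (-(1 : ℝ) / 2) * p.1 ^ 2 ∧ Real.sqrt p.1 ≤ p.2}

/-- The M-branch formula of `ψ_3D`. -/
noncomputable def fM (μ r : ℝ) (p : ℝ × ℝ) : ℝ :=
  μ / 2 * (r ^ ((1 : ℝ) / 3) * (2 * p.2 / r ^ ((1 : ℝ) / 2) + 1 / p.2 ^ 2) - 3)

/-- The S-branch formula of `ψ_3D` (which is also `φ_3D`). -/
noncomputable def fS (μ r : ℝ) (p : ℝ × ℝ) : ℝ :=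
  μ / 2 * (r ^ ((1 : ℝ) / 3) * (p.1 ^ 2 / r + p.2 ^ 2 / p.1 ^ 2 + 1 / p.2 ^ 2) - 3)

open Classical in
/-- The relaxed energy function `ψ_3D` of DeSimone–Dolzmann. -/
noncomputable def psi3D (μ r : ℝ) (p : ℝ × ℝ) : ℝ :=
  if p ∈ Lset r then 0 else if p ∈ Mset r then fM μ r p else fS μ r p

/-- The admissible region `{(s,t) : s ≥ 0, t ≥ 0, s^{1/2} ≤ t ≤ s²}`. -/
def Adm : Set (ℝ × ℝ) :=
  {p | 0 ≤ p.1 ∧ 0 ≤ p.2 ∧ Real.sqrt p.1 ≤ p.2 ∧ p.2 ≤ p.1 ^ 2}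

private lemma decomp (μ R s t : ℝ) (hR : R ≠ 0) (ht : t ≠ 0) (hs : s ≠ 0) :
    μ / 2 * (R ^ 2 * (s ^ 2 / R ^ 6 + t ^ 2 / s ^ 2 + 1 / t ^ 2) - 3)
      = μ / 2 * ((t / R - 1) ^ 2 * (2 * t / R + 1) * (R / t) ^ 2)
        + μ / 2 * (R ^ 2 * (s / R ^ 3 - t / s) ^ 2) := by
  field_simp
  ring

private lemma fM_decomp (μ R t : ℝ) (hR : R ≠ 0) (ht : t ≠ 0) :
    μ / 2 * (R ^ 2 * (2 * t / R ^ 3 + 1 / t ^ 2) - 3)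
      = μ / 2 * ((t / R - 1) ^ 2 * (2 * t / R + 1) * (R / t) ^ 2) := by
  field_simp
  ring

private lemma rpowfacts (r : ℝ) (hr : 1 ≤ r) :
    r ^ ((1:ℝ)/3) = (r ^ ((1:ℝ)/6)) ^ 2 ∧ r ^ ((1:ℝ)/2) = (r ^ ((1:ℝ)/6)) ^ 3 ∧
    r ^ (-(1:ℝ)/2) = 1 / (r ^ ((1:ℝ)/6)) ^ 3 ∧ r = (r ^ ((1:ℝ)/6)) ^ 6 ∧
    1 ≤ r ^ ((1:ℝ)/6) := by
  have h0 : (0:ℝ) ≤ r := by linarith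
  refine ⟨?_, ?_, ?_, ?_, ?_⟩
  · rw [show ((1:ℝ)/3) = (1/6) * ((2:ℕ):ℝ) by norm_num, Real.rpow_mul h0, Real.rpow_natCast]
  · rw [show ((1:ℝ)/2) = (1/6) * ((3:ℕ):ℝ) by norm_num, Real.rpow_mul h0, Real.rpow_natCast]
  · rw [show (-(1:ℝ)/2) = -(1/2) by norm_num, Real.rpow_neg h0,
      show ((1:ℝ)/2) = (1/6) * ((3:ℕ):ℝ) by norm_num, Real.rpow_mul h0, Real.rpow_natCast]
    exact (one_div _).symm
  · conv_lhs => rw [← Real.rpow_one r, show (1:ℝ) = (1/6) * ((6:ℕ):ℝ) by norm_num,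
      Real.rpow_mul h0, Real.rpow_natCast]
  · exact Real.one_le_rpow hr (by norm_num)

set_option maxHeartbeats 1000000 in
/-- `ψ_3D ≤ φ_3D` on the admissible region (where `φ_3D = fS`), with equality on S
and, for `r > 1`, strict inequality in the interiors of L and M. -/
theorem psi3D_le_phi3D (μ r : ℝ) (hμ : 0 < μ) (hr : 1 ≤ r) :
    (∀ p ∈ Adm, 0 < p.1 → psi3D μ r p ≤ fS μ r p) ∧
    (∀ p ∈ Sset r, 0 < p.1 → psi3D μ r p = fS μ r p) ∧
    (1 < r → ∀ p : ℝ × ℝ,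
      (p.2 < p.1 ^ 2 ∧ p.2 < r ^ ((1 : ℝ) / 6) ∧ Real.sqrt p.1 < p.2) →
      psi3D μ r p < fS μ r p) ∧
    (1 < r → ∀ p : ℝ × ℝ,
      (p.2 < p.1 ^ 2 ∧ r ^ (-(1 : ℝ) / 2) * p.1 ^ 2 < p.2 ∧ r ^ ((1 : ℝ) / 6) < p.2) →
      psi3D μ r p < fS μ r p) := by
  obtain ⟨h13, h12, hm12, hr6, hR1⟩ := rpowfacts r hr
  set R := r ^ ((1:ℝ)/6) with hRdef
  clear_value R
  have hR0 : (0:ℝ) < R := by linarith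
  have hRne : R ≠ 0 := ne_of_gt hR0
  have hR3 : (0:ℝ) < R ^ 3 := by positivity
  -- decompositions of fS and fM
  have hfS : ∀ p : ℝ × ℝ, p.2 ≠ 0 → p.1 ≠ 0 →
      fS μ r p = μ / 2 * ((p.2 / R - 1) ^ 2 * (2 * p.2 / R + 1) * (R / p.2) ^ 2)
        + μ / 2 * (R ^ 2 * (p.1 / R ^ 3 - p.2 / p.1) ^ 2) := by
    intro p ht hs
    have e : fS μ r p = μ / 2 * (R ^ 2 * (p.1 ^ 2 / R ^ 6 + p.2 ^ 2 / p.1 ^ 2 + 1 / p.2 ^ 2) - 3) := by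
      rw [fS, h13, show p.1 ^ 2 / r = p.1 ^ 2 / R ^ 6 from by rw [← hr6]]
    rw [e]
    exact decomp μ R p.1 p.2 hRne ht hs
  have hfM : ∀ p : ℝ × ℝ, p.2 ≠ 0 →
      fM μ r p = μ / 2 * ((p.2 / R - 1) ^ 2 * (2 * p.2 / R + 1) * (R / p.2) ^ 2) := by
    intro p ht
    rw [fM, h13, h12]
    exact fM_decomp μ R p.2 hRne ht
  -- nonnegativity of the two terms
  have hT1 : ∀ t : ℝ, 0 < t →
      0 ≤ μ / 2 * ((t / R - 1) ^ 2 * (2 * t / R + 1) * (R / t) ^ 2) := by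
    intro t ht
    have h2 : 0 < 2 * t / R + 1 := by
      have := div_pos (by linarith : (0:ℝ) < 2 * t) hR0
      linarith
    have h := mul_nonneg (mul_nonneg (sq_nonneg (t / R - 1)) h2.le) (sq_nonneg (R / t))
    exact mul_nonneg (by linarith : (0:ℝ) ≤ μ / 2) h
  have hT2 : ∀ s t : ℝ, 0 ≤ μ / 2 * (R ^ 2 * (s / R ^ 3 - t / s) ^ 2) := by
    intro s t
    exact mul_nonneg (by linarith : (0:ℝ) ≤ μ / 2)
      (mul_nonneg (sq_nonneg R) (sq_nonneg _))
  refine ⟨?_, ?_, ?_, ?_⟩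
  · -- part 1 : ψ ≤ φ on Adm
    rintro p ⟨_, _, hsq, _⟩ hs
    have ht : 0 < p.2 := lt_of_lt_of_le (Real.sqrt_pos.mpr hs) hsq
    unfold psi3D
    split_ifs with hL hM
    · rw [hfS p ht.ne' hs.ne']
      exact add_nonneg (hT1 p.2 ht) (hT2 p.1 p.2)
    · rw [hfM p ht.ne', hfS p ht.ne' hs.ne']
      linarith [hT2 p.1 p.2]
    · exact le_refl _
  · -- part 2 : equality on S
    rintro p ⟨hS1, hS2⟩ hs
    have ht : 0 < p.2 := lt_of_lt_of_le (Real.sqrt_pos.mpr hs) hS2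
    rw [hm12] at hS1
    have hs2 : R ^ 3 * p.2 ≤ p.1 ^ 2 := by
      have h := mul_le_mul_of_nonneg_left hS1 hR3.le
      have heq : R ^ 3 * (1 / R ^ 3 * p.1 ^ 2) = p.1 ^ 2 := by field_simp
      linarith
    unfold psi3D
    split_ifs with hL hM
    · -- in L : φ = 0 there
      obtain ⟨hL1, hL2, _⟩ := hL
      have hst : p.1 ≤ p.2 ^ 2 := by
        nlinarith [Real.sq_sqrt hs.le, Real.sqrt_nonneg p.1, hS2]
      have h1 : p.1 ^ 2 ≤ p.2 ^ 4 := by nlinarith [hs.le]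
      have h2 : R ^ 3 ≤ p.2 ^ 3 := by nlinarith
      have h3 : R ≤ p.2 := by
        nlinarith [sq_nonneg (R - p.2), sq_nonneg (R + p.2), mul_pos hR0 ht]
      have hL2' : p.2 ≤ R := by rw [hRdef]; exact hL2
      have htR : p.2 = R := le_antisymm hL2' h3
      have heq2 : p.1 ^ 2 = R ^ 3 * p.2 := by
        refine le_antisymm ?_ hs2
        calc p.1 ^ 2 ≤ p.2 ^ 4 := h1
          _ = R ^ 3 * p.2 := by rw [htR]; ring
      rw [hfS p ht.ne' hs.ne']
      have e1 : p.2 / R - 1 = 0 := by rw [htR, div_self hRne, sub_self]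
      have e2 : p.1 / R ^ 3 - p.2 / p.1 = 0 := by
        rw [sub_eq_zero, div_eq_div_iff hR3.ne' hs.ne']
        nlinarith [heq2]
      rw [e1, e2]; ring
    · -- in M : fM = φ there
      obtain ⟨_, hM2, _⟩ := hM
      rw [hm12] at hM2
      have hs2' : p.1 ^ 2 ≤ R ^ 3 * p.2 := by
        have h := mul_le_mul_of_nonneg_left hM2 hR3.le
        have heq : R ^ 3 * (1 / R ^ 3 * p.1 ^ 2) = p.1 ^ 2 := by field_simp
        linarith
      have heq2 : p.1 ^ 2 = R ^ 3 * p.2 := le_antisymm hs2' hs2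
      rw [hfM p ht.ne', hfS p ht.ne' hs.ne']
      have e2 : p.1 / R ^ 3 - p.2 / p.1 = 0 := by
        rw [sub_eq_zero, div_eq_div_iff hR3.ne' hs.ne']
        nlinarith [heq2]
      rw [e2]; ring
    · rfl
  · -- part 3 : strict on interior of L
    rintro hr1 p ⟨h1, h2, h3⟩
    have ht : 0 < p.2 := lt_of_le_of_lt (Real.sqrt_nonneg p.1) h3
    have hs2pos : 0 < p.1 ^ 2 := lt_trans ht h1
    have hsne : p.1 ≠ 0 := by
      intro h; rw [h] at hs2pos; simp at hs2pos
    have hL : p ∈ Lset r := ⟨h1.le, by rw [← hRdef]; exact h2.le, h3.le⟩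
    unfold psi3D
    rw [if_pos hL]
    rw [hfS p ht.ne' hsne]
    have hdiv : p.2 / R < 1 := (div_lt_one hR0).mpr h2
    have e1 : 0 < (p.2 / R - 1) ^ 2 :=
      (sq_nonneg _).lt_of_ne (Ne.symm (pow_ne_zero 2 (by linarith : p.2 / R - 1 ≠ 0)))
    have h2a : 0 < 2 * p.2 / R + 1 := by
      have := div_pos (by linarith : (0:ℝ) < 2 * p.2) hR0
      linarith
    have e3 : 0 < (R / p.2) ^ 2 :=
      (sq_nonneg _).lt_of_ne (Ne.symm (pow_ne_zero 2 (div_ne_zero hRne ht.ne')))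
    have hpos : 0 < μ / 2 * ((p.2 / R - 1) ^ 2 * (2 * p.2 / R + 1) * (R / p.2) ^ 2) :=
      mul_pos (by linarith) (mul_pos (mul_pos e1 h2a) e3)
    linarith [hT2 p.1 p.2]
  · -- part 4 : strict on interior of M
    rintro hr1 p ⟨h1, h2, h3⟩
    have hRt : R < p.2 := h3
    have ht : 0 < p.2 := lt_trans hR0 hRt
    have hs2pos : 0 < p.1 ^ 2 := lt_trans ht h1
    have hsne : p.1 ≠ 0 := by
      intro h; rw [h] at hs2pos; simp at hs2pos
    have hnotL : p ∉ Lset r := by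
      intro hL
      have h' : p.2 ≤ R := by rw [hRdef]; exact hL.2.1
      linarith
    have hM : p ∈ Mset r := ⟨h1.le, h2.le, by rw [← hRdef]; exact h3.le⟩
    unfold psi3D
    rw [if_neg hnotL, if_pos hM]
    rw [hfM p ht.ne', hfS p ht.ne' hsne]
    rw [hm12] at h2
    have hlt : p.1 ^ 2 < R ^ 3 * p.2 := by
      have h := mul_lt_mul_of_pos_left h2 hR3
      have heq : R ^ 3 * (1 / R ^ 3 * p.1 ^ 2) = p.1 ^ 2 := by field_simp
      linarith
    have e2 : p.1 / R ^ 3 - p.2 / p.1 ≠ 0 := by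
      rw [sub_ne_zero]
      intro h
      have := (div_eq_div_iff hR3.ne' hsne).mp h
      nlinarith
    have hq : 0 < (p.1 / R ^ 3 - p.2 / p.1) ^ 2 :=
      (sq_nonneg _).lt_of_ne (Ne.symm (pow_ne_zero 2 e2))
    have hpos : 0 < μ / 2 * (R ^ 2 * (p.1 / R ^ 3 - p.2 / p.1) ^ 2) :=
      mul_pos (by linarith) (mul_pos (by positivity) hq)
    linarith
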